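/- arXiv:1212.4667 — 3 statements merged into one kernel-verified Lean document; each statement's English description precedes it below -/
import Mathlib

section
/- For every real c > 0 and every ε with 0 < ε < c/2 there exists n₀ such that for every integer n ≥ n₀ the following holds: if G is an oriented graph on n vertices in which every vertex v satisfies (c - ε)n < d⁺(v) < (c + ε)n and (c - ε)n < d⁻(v) < (c + ε)n, then there exists a subset V₀ of V(G) of size ⌈n^{2/3}⌉ such that for every vertex v of G, both |N⁺(v) ∩ V₀| and |N⁻(v) ∩ V₀| lie strictly between (c - 2ε)|V₀| and (c + 2ε)|V₀|. -/
/-- Outdegree of `v` in the digraph given by the relation `R`. -/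
noncomputable def outDeg {n : ℕ} (R : Fin n → Fin n → Prop) (v : Fin n) : ℕ :=
  Set.ncard {u | R v u}

/-- Indegree of `v` in the digraph given by the relation `R`. -/
noncomputable def inDeg {n : ℕ} (R : Fin n → Fin n → Prop) (v : Fin n) : ℕ :=
  Set.ncard {u | R u v}

/- ### Auxiliary lemmas -/

lemma sum_pi_prod {m n : ℕ} (h : Fin m → Fin n → ℝ) :
    ∑ f : Fin m → Fin n, ∏ t, h t (f t) = ∏ t, ∑ u, h t u := by
  rw [Finset.prod_univ_sum]
  exact (Finset.sum_congr (by simp [Fintype.piFinset_univ]) (fun f _ => rfl)).symm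

lemma exists_single {α : Type*} [DecidableEq α] (i j k l : α)
    (h : ¬((i = j ∧ k = l) ∨ (i = k ∧ j = l) ∨ (i = l ∧ j = k))) :
    ∃ t, ((if i = t then 1 else 0) + (if j = t then 1 else 0) +
      (if k = t then 1 else 0) + (if l = t then 1 else 0) : ℕ) = 1 := by
  push_neg at h
  obtain ⟨h1, h2, h3⟩ := h
  by_cases hij : i = j
  · have hkl : k ≠ l := h1 hij
    subst hij
    by_cases hik : i = k
    · subst hik
      exact ⟨l, by simp [hkl, Ne.symm hkl]⟩
    · exact ⟨k, by simp [hik, hkl, Ne.symm hkl]⟩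
  · by_cases hik : i = k
    · have hjl : j ≠ l := h2 hik
      subst hik
      exact ⟨j, by simp [hij, Ne.symm hij, Ne.symm hjl]⟩
    · by_cases hil : i = l
      · have hjk : j ≠ k := h3 hil
        subst hil
        exact ⟨j, by simp [hij, Ne.symm hij, Ne.symm hjk]⟩
      · exact ⟨i, by simp [Ne.symm hij, Ne.symm hik, Ne.symm hil]⟩

lemma expand4 {m : ℕ} (x : Fin m → ℝ) :
    (∑ i, x i) ^ 4 = ∑ q : Fin m × Fin m × Fin m × Fin m,
      x q.1 * x q.2.1 * x q.2.2.1 * x q.2.2.2 := by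
  simp only [Fintype.sum_prod_type]
  rw [show (∑ i, x i)^4 = (∑ i, x i)*(∑ i, x i)*(∑ i, x i)*(∑ i, x i) from by ring]
  simp only [Finset.sum_mul, Finset.mul_sum]
  exact Finset.sum_congr rfl fun a _ => Finset.sum_congr rfl fun b _ =>
    Finset.sum_congr rfl fun c _ => Finset.sum_congr rfl fun d _ => by ring

lemma fourth_moment {m n : ℕ} (g : Fin n → ℝ) (hg1 : ∀ u, |g u| ≤ 1)
    (hg0 : ∑ u, g u = 0) :
    ∑ f : Fin m → Fin n, (∑ i, g (f i)) ^ 4 ≤ 3 * (m : ℝ) ^ 2 * (n : ℝ) ^ m := by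
  classical
  set cnt : (Fin m × Fin m × Fin m × Fin m) → Fin m → ℕ := fun q t =>
    (if q.1 = t then 1 else 0) + (if q.2.1 = t then 1 else 0) +
    (if q.2.2.1 = t then 1 else 0) + (if q.2.2.2 = t then 1 else 0) with hcnt
  set T : (Fin m × Fin m × Fin m × Fin m) → ℝ := fun q => ∏ t, ∑ u, g u ^ cnt q t with hT
  set P : (Fin m × Fin m × Fin m × Fin m) → Prop := fun q =>
    (q.1 = q.2.1 ∧ q.2.2.1 = q.2.2.2) ∨ (q.1 = q.2.2.1 ∧ q.2.1 = q.2.2.2) ∨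
    (q.1 = q.2.2.2 ∧ q.2.1 = q.2.2.1) with hP
  have key : ∑ f : Fin m → Fin n, (∑ i, g (f i)) ^ 4 = ∑ q, T q := by
    have h1 : ∀ f : Fin m → Fin n, (∑ i, g (f i)) ^ 4 =
        ∑ q : Fin m × Fin m × Fin m × Fin m, ∏ t, g (f t) ^ cnt q t := by
      intro f
      rw [expand4 (fun i => g (f i))]
      refine Finset.sum_congr rfl fun q _ => ?_
      simp only [hcnt, pow_add, Finset.prod_mul_distrib, pow_ite, pow_zero, pow_one,
        Finset.prod_ite_eq, Finset.mem_univ, if_true]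
    simp only [h1]
    rw [Finset.sum_comm]
    exact Finset.sum_congr rfl fun q _ => sum_pi_prod (fun t u => g u ^ cnt q t)
  rw [key]
  have hT0 : ∀ q, ¬ P q → T q = 0 := by
    intro q hq
    obtain ⟨t, ht⟩ := exists_single q.1 q.2.1 q.2.2.1 q.2.2.2 hq
    refine Finset.prod_eq_zero (Finset.mem_univ t) ?_
    rw [show cnt q t = 1 from ht]
    simpa using hg0
  have hTb : ∀ q, T q ≤ (n : ℝ) ^ m := by
    intro q
    calc T q ≤ |T q| := le_abs_self _
    _ = ∏ t, |∑ u, g u ^ cnt q t| := by rw [hT]; exact Finset.abs_prod _ _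
    _ ≤ ∏ _t : Fin m, (n : ℝ) := by
        refine Finset.prod_le_prod (fun t _ => abs_nonneg _) fun t _ => ?_
        calc |∑ u, g u ^ cnt q t| ≤ ∑ u, |g u ^ cnt q t| := Finset.abs_sum_le_sum_abs _ _
        _ ≤ ∑ _u : Fin n, (1 : ℝ) := by
            refine Finset.sum_le_sum fun u _ => ?_
            rw [abs_pow]
            exact pow_le_one₀ (abs_nonneg _) (hg1 u)
        _ = (n : ℝ) := by simp
    _ = (n : ℝ) ^ m := by simp
  have hsub : Finset.univ.filter P ⊆
      (Finset.univ.image fun p : Fin m × Fin m => (p.1, p.1, p.2, p.2)) ∪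
      (Finset.univ.image fun p : Fin m × Fin m => (p.1, p.2, p.1, p.2)) ∪
      (Finset.univ.image fun p : Fin m × Fin m => (p.1, p.2, p.2, p.1)) := by
    intro q hq
    rw [Finset.mem_filter] at hq
    obtain ⟨a, b, c, d⟩ := q
    simp only [Finset.mem_union, Finset.mem_image, Finset.mem_univ, true_and, Prod.mk.injEq]
    rcases hq.2 with ⟨h1, h2⟩ | ⟨h1, h2⟩ | ⟨h1, h2⟩
    · exact Or.inl (Or.inl ⟨(a, c), rfl, h1, rfl, h2⟩)
    · exact Or.inl (Or.inr ⟨(a, b), rfl, rfl, h1, h2⟩)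
    · exact Or.inr ⟨(a, b), rfl, rfl, h2, h1⟩
  have hcard : (Finset.univ.filter P).card ≤ 3 * m ^ 2 := by
    calc (Finset.univ.filter P).card ≤ _ := Finset.card_le_card hsub
    _ ≤ _ + _ := Finset.card_union_le _ _
    _ ≤ (_ + _) + _ := by gcongr; exact Finset.card_union_le _ _
    _ ≤ m ^ 2 + m ^ 2 + m ^ 2 := by
        gcongr <;> refine (Finset.card_image_le).trans ?_ <;>
          simp [Fintype.card_prod, sq]
    _ = 3 * m ^ 2 := by ring
  calc ∑ q, T q = ∑ q ∈ Finset.univ.filter P, T q := by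
        refine (Finset.sum_filter_of_ne fun q _ hq => ?_).symm
        by_contra h; exact hq (hT0 q h)
  _ ≤ (Finset.univ.filter P).card • ((n : ℝ) ^ m) :=
        Finset.sum_le_card_nsmul _ _ _ fun q _ => hTb q
  _ = ((Finset.univ.filter P).card : ℝ) * (n : ℝ) ^ m := by rw [nsmul_eq_mul]
  _ ≤ 3 * (m : ℝ) ^ 2 * (n : ℝ) ^ m := by
        have h3 : ((Finset.univ.filter P).card : ℝ) ≤ 3 * (m : ℝ) ^ 2 := by
          exact_mod_cast hcard
        have hn : (0:ℝ) ≤ (n : ℝ) ^ m := by positivity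
        nlinarith

lemma markov_real {Ω : Type*} [Fintype Ω] [DecidableEq Ω] (F : Ω → ℝ) (hF : ∀ ω, 0 ≤ F ω)
    (t : ℝ) (ht : 0 < t) (p : Ω → Prop) [DecidablePred p] (hp : ∀ ω, p ω → t ≤ F ω) :
    ((Finset.univ.filter p).card : ℝ) * t ≤ ∑ ω, F ω := by
  calc ((Finset.univ.filter p).card : ℝ) * t = ∑ _ω ∈ Finset.univ.filter p, t := by
        rw [Finset.sum_const, nsmul_eq_mul]
  _ ≤ ∑ ω ∈ Finset.univ.filter p, F ω :=
        Finset.sum_le_sum fun ω hω => hp ω (Finset.mem_filter.mp hω).2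
  _ ≤ ∑ ω, F ω := Finset.sum_le_sum_of_subset_of_nonneg (Finset.filter_subset _ _)
        (fun ω _ _ => hF ω)

lemma card_coordfix {m n : ℕ} (i j : Fin m) (hij : i ≠ j) :
    (Finset.univ.filter fun f : Fin m → Fin n => f j = f i).card ≤ n ^ (m - 1) := by
  classical
  have h1 : (Finset.univ.filter fun f : Fin m → Fin n => f j = f i).card ≤
      (Finset.univ : Finset ({t : Fin m // t ≠ j} → Fin n)).card := by
    apply Finset.card_le_card_of_injOn (fun f => fun t => f t.1) (fun _ _ => Finset.mem_univ _)
    intro f1 hf1 f2 hf2 heq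
    rw [Finset.mem_coe, Finset.mem_filter] at hf1 hf2
    funext t
    by_cases ht : t = j
    · subst ht
      rw [hf1.2, hf2.2]
      exact congrFun heq ⟨i, hij⟩
    · exact congrFun heq ⟨t, ht⟩
  refine h1.trans ?_
  rw [Finset.card_univ, Fintype.card_fun, Fintype.card_fin,
    show Fintype.card {t : Fin m // t ≠ j} = m - 1 from by simp [Fintype.card_subtype_compl]]

/-- Number of indices which repeat an earlier value. -/
noncomputable def rep {m n : ℕ} (f : Fin m → Fin n) : ℕ :=
  (Finset.univ.filter fun i => ∃ j, j < i ∧ f j = f i).card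

lemma sum_rep_le (m n : ℕ) :
    ∑ f : Fin m → Fin n, rep f ≤ m ^ 2 * n ^ (m - 1) := by
  classical
  have swap : ∑ f : Fin m → Fin n, rep f =
      ∑ i : Fin m, (Finset.univ.filter
        fun f : Fin m → Fin n => ∃ j, j < i ∧ f j = f i).card := by
    simp only [rep, Finset.card_filter]
    rw [Finset.sum_comm]
  rw [swap]
  have hbound : ∀ i : Fin m, (Finset.univ.filter
      fun f : Fin m → Fin n => ∃ j, j < i ∧ f j = f i).card ≤ m * n ^ (m - 1) := by
    intro i
    have hsub : (Finset.univ.filter fun f : Fin m → Fin n => ∃ j, j < i ∧ f j = f i) ⊆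
        (Finset.univ.filter fun j : Fin m => j < i).biUnion
          (fun j => Finset.univ.filter fun f : Fin m → Fin n => f j = f i) := by
      intro f hf
      rw [Finset.mem_filter] at hf
      obtain ⟨j, hj, hfj⟩ := hf.2
      exact Finset.mem_biUnion.mpr ⟨j, by simp [hj], by simp [hfj]⟩
    calc _ ≤ _ := Finset.card_le_card hsub
    _ ≤ ∑ j ∈ Finset.univ.filter fun j : Fin m => j < i,
          (Finset.univ.filter fun f : Fin m → Fin n => f j = f i).card :=
        Finset.card_biUnion_le
    _ ≤ ∑ _j ∈ Finset.univ.filter fun j : Fin m => j < i, n ^ (m - 1) :=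
        Finset.sum_le_sum fun j hj =>
          card_coordfix i j (Ne.symm (Fin.ne_of_lt (Finset.mem_filter.mp hj).2))
    _ ≤ m * n ^ (m - 1) := by
        rw [Finset.sum_const, smul_eq_mul]
        exact Nat.mul_le_mul_right _ ((Finset.card_filter_le _ _).trans (by simp))
  calc _ ≤ ∑ _i : Fin m, m * n ^ (m - 1) := Finset.sum_le_sum fun i _ => hbound i
  _ = m ^ 2 * n ^ (m - 1) := by simp [sq]; ring

lemma def_le_rep {m n : ℕ} (f : Fin m → Fin n) :
    m - (Finset.image f Finset.univ).card ≤ rep f := by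
  classical
  have hinj : (Finset.univ.filter fun i : Fin m => ¬ ∃ j, j < i ∧ f j = f i).card ≤
      (Finset.image f Finset.univ).card := by
    apply Finset.card_le_card_of_injOn f (fun i _ => Finset.mem_image_of_mem f (Finset.mem_univ _))
    intro i1 h1 i2 h2 heq
    rw [Finset.mem_coe, Finset.mem_filter] at h1 h2
    by_contra hne
    rcases lt_or_gt_of_ne hne with h | h
    · exact h2.2 ⟨i1, h, heq⟩
    · exact h1.2 ⟨i2, h, heq.symm⟩
  have hsplit : (Finset.univ.filter fun i : Fin m => ∃ j, j < i ∧ f j = f i).card +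
      (Finset.univ.filter fun i : Fin m => ¬ ∃ j, j < i ∧ f j = f i).card = m := by
    rw [Finset.card_filter_add_card_filter_not]
    simp
  simp only [rep]
  omega

lemma count_close {n m : ℕ} (f : Fin m → Fin n) (V₀ N : Finset (Fin n))
    (himg : Finset.image f Finset.univ ⊆ V₀) (hV : V₀.card = m) :
    (V₀ ∩ N).card ≤ (Finset.univ.filter fun i => f i ∈ N).card +
        (m - (Finset.image f Finset.univ).card) ∧
    (Finset.univ.filter fun i => f i ∈ N).card ≤ (V₀ ∩ N).card +
        (m - (Finset.image f Finset.univ).card) := by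
  classical
  set s := Finset.univ.filter fun i => f i ∈ N with hs
  set t := s.image f with ht
  have htsub : t ⊆ V₀ ∩ N := by
    intro u hu
    rw [ht, Finset.mem_image] at hu
    obtain ⟨i, hi, rfl⟩ := hu
    rw [hs, Finset.mem_filter] at hi
    exact Finset.mem_inter.mpr ⟨himg (Finset.mem_image_of_mem f (Finset.mem_univ _)), hi.2⟩
  have h1 : (Finset.image f Finset.univ).card + s.card ≤ t.card + m := by
    have hsub2 : Finset.image f Finset.univ ⊆ t ∪ Finset.image f (Finset.univ \ s) := by
      intro u hu
      rw [Finset.mem_image] at hu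
      obtain ⟨i, _, rfl⟩ := hu
      by_cases hi : i ∈ s
      · exact Finset.mem_union_left _ (Finset.mem_image_of_mem f hi)
      · exact Finset.mem_union_right _ (Finset.mem_image_of_mem f (by simp [hi]))
    calc (Finset.image f Finset.univ).card + s.card
        ≤ (t ∪ Finset.image f (Finset.univ \ s)).card + s.card := by
          exact Nat.add_le_add_right (Finset.card_le_card hsub2) _
    _ ≤ (t.card + (Finset.univ \ s).card) + s.card := by
          exact Nat.add_le_add_right ((Finset.card_union_le _ _).trans
            (Nat.add_le_add_left Finset.card_image_le _)) _
    _ = t.card + m := by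
          rw [add_assoc, Finset.card_sdiff_add_card_eq_card (Finset.subset_univ s)]
          simp
  have h2 : V₀ ∩ N ⊆ t ∪ (V₀ \ Finset.image f Finset.univ) := by
    intro u hu
    rw [Finset.mem_inter] at hu
    by_cases him : u ∈ Finset.image f Finset.univ
    · rw [Finset.mem_image] at him
      obtain ⟨i, _, rfl⟩ := him
      exact Finset.mem_union_left _ (Finset.mem_image_of_mem f (by simp [hs, hu.2]))
    · exact Finset.mem_union_right _ (Finset.mem_sdiff.mpr ⟨hu.1, him⟩)
  have h2' : (V₀ ∩ N).card ≤ t.card + (m - (Finset.image f Finset.univ).card) := by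
    calc (V₀ ∩ N).card ≤ (t ∪ (V₀ \ Finset.image f Finset.univ)).card := Finset.card_le_card h2
    _ ≤ t.card + (V₀ \ Finset.image f Finset.univ).card := Finset.card_union_le _ _
    _ = t.card + (m - (Finset.image f Finset.univ).card) := by
        rw [Finset.card_sdiff_of_subset himg, hV]
  constructor
  · exact h2'.trans (by gcongr; exact Finset.card_image_le)
  · have h3 := Finset.card_le_card htsub
    have himc : (Finset.image f Finset.univ).card ≤ m := by
      simpa [hV] using Finset.card_le_card himg
    omega

lemma good_count {n m : ℕ} (hn : 0 < n) (hm : 0 < m) (c ε : ℝ) (hε0 : 0 < ε)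
    (f : Fin m → Fin n) (V₀ N : Finset (Fin n))
    (himg : Finset.image f Finset.univ ⊆ V₀) (hV : V₀.card = m)
    (hN1 : (c - ε) * n < N.card) (hN2 : (N.card : ℝ) < (c + ε) * n)
    (hdev : |∑ i, ((if f i ∈ N then (1:ℝ) else 0) - N.card / n)| < ε * m / 4)
    (hrep : ((rep f : ℕ) : ℝ) < ε * m / 4) :
    (c - 2*ε) * m < ((V₀ ∩ N).card : ℝ) ∧ ((V₀ ∩ N).card : ℝ) < (c + 2*ε) * m := by
  classical
  have hnR : (0:ℝ) < n := by exact_mod_cast hn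
  have hmR : (0:ℝ) < m := by exact_mod_cast hm
  have hsum : ∑ i, ((if f i ∈ N then (1:ℝ) else 0) - N.card / n) =
      ((Finset.univ.filter fun i => f i ∈ N).card : ℝ) - m * (N.card / n) := by
    rw [Finset.sum_sub_distrib, Finset.sum_boole, Finset.sum_const]
    simp [Finset.filter_congr_decidable]
  rw [hsum] at hdev
  have hD : ((m - (Finset.image f Finset.univ).card : ℕ) : ℝ) < ε * m / 4 :=
    lt_of_le_of_lt (by exact_mod_cast def_le_rep f) hrep
  obtain ⟨hc1, hc2⟩ := count_close f V₀ N himg hV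
  have hc1R : ((V₀ ∩ N).card : ℝ) ≤ ((Finset.univ.filter fun i => f i ∈ N).card : ℝ) +
      ((m - (Finset.image f Finset.univ).card : ℕ) : ℝ) := by exact_mod_cast hc1
  have hc2R : ((Finset.univ.filter fun i => f i ∈ N).card : ℝ) ≤ ((V₀ ∩ N).card : ℝ) +
      ((m - (Finset.image f Finset.univ).card : ℕ) : ℝ) := by exact_mod_cast hc2
  have hμ1 : (c - ε) * m < m * ((N.card : ℝ) / n) := by
    rw [mul_div_assoc', lt_div_iff₀ hnR]
    calc (c - ε) * m * n = (c - ε) * n * m := by ring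
    _ < (N.card : ℝ) * m := by exact mul_lt_mul_of_pos_right hN1 hmR
    _ = m * N.card := by ring
  have hμ2 : m * ((N.card : ℝ) / n) < (c + ε) * m := by
    rw [mul_div_assoc', div_lt_iff₀ hnR]
    calc (m : ℝ) * N.card = (N.card : ℝ) * m := by ring
    _ < (c + ε) * n * m := by exact mul_lt_mul_of_pos_right hN2 hmR
    _ = (c + ε) * m * n := by ring
  rw [abs_lt] at hdev
  constructor <;> nlinarith [hdev.1, hdev.2]

lemma bad_card {n m : ℕ} (hn : 0 < n) (N : Finset (Fin n)) (ρ : ℝ) (hρ : 0 < ρ)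
    [DecidablePred fun f : Fin m → Fin n =>
      ρ ≤ |∑ i, ((if f i ∈ N then (1:ℝ) else 0) - N.card / n)|] :
    ((Finset.univ.filter fun f : Fin m → Fin n =>
        ρ ≤ |∑ i, ((if f i ∈ N then (1:ℝ) else 0) - N.card / n)|).card : ℝ) * ρ ^ 4 ≤
      3 * (m : ℝ) ^ 2 * (n : ℝ) ^ m := by
  classical
  have hnR : (0:ℝ) < n := by exact_mod_cast hn
  set g : Fin n → ℝ := fun u => (if u ∈ N then (1:ℝ) else 0) - N.card / n with hg
  have hNn : (N.card : ℝ) ≤ n := by exact_mod_cast Finset.card_le_univ N |>.trans_eq (by simp)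
  have hdn : 0 ≤ (N.card : ℝ) / n := by positivity
  have hdn1 : (N.card : ℝ) / n ≤ 1 := by rw [div_le_one hnR]; exact hNn
  have hg1 : ∀ u, |g u| ≤ 1 := by
    intro u
    rw [abs_le, hg]
    constructor <;> [skip; skip] <;> dsimp only <;> split <;> linarith
  have hg0 : ∑ u, g u = 0 := by
    rw [hg]
    rw [Finset.sum_sub_distrib, Finset.sum_boole, Finset.sum_const]
    simp only [Finset.filter_univ_mem, Finset.card_univ, Fintype.card_fin, nsmul_eq_mul]
    field_simp
    ring
  have hmk := markov_real (fun f : Fin m → Fin n => (∑ i, g (f i)) ^ 4)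
    (fun f => by positivity) (ρ ^ 4) (by positivity)
    (fun f => ρ ≤ |∑ i, g (f i)|)
    (fun f hf => by
      calc ρ ^ 4 ≤ |∑ i, g (f i)| ^ 4 := by
            exact pow_le_pow_left₀ hρ.le hf 4
      _ = (∑ i, g (f i)) ^ 4 := by
            rw [← abs_pow]
            exact abs_of_nonneg (by positivity)
      )
  refine le_trans ?_ ((hmk).trans (fourth_moment g hg1 hg0))
  apply le_of_eq
  congr 2

lemma repbad_card {n m : ℕ} (ρ : ℝ) (hρ : 0 < ρ)
    [DecidablePred fun f : Fin m → Fin n => ρ ≤ (rep f : ℝ)] :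
    ((Finset.univ.filter fun f : Fin m → Fin n => ρ ≤ (rep f : ℝ)).card : ℝ) * ρ ≤
      (m : ℝ) ^ 2 * (n : ℝ) ^ (m - 1) := by
  classical
  have hmk := markov_real (fun f : Fin m → Fin n => (rep f : ℝ))
    (fun f => by positivity) ρ hρ (fun f => ρ ≤ (rep f : ℝ)) (fun f hf => hf)
  refine le_trans (le_of_eq (by congr 1)) (hmk.trans ?_)
  calc ∑ f : Fin m → Fin n, (rep f : ℝ) = ((∑ f : Fin m → Fin n, rep f : ℕ) : ℝ) := by
        push_cast; rfl
  _ ≤ ((m ^ 2 * n ^ (m - 1) : ℕ) : ℝ) := by exact_mod_cast sum_rep_le m n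
  _ = (m : ℝ) ^ 2 * (n : ℝ) ^ (m - 1) := by push_cast; rfl

lemma half1_aux (n m : ℕ) (ε ρ : ℝ) (hε0 : 0 < ε) (hmR : (0:ℝ) < m)
    (hnm0 : (0:ℝ) < (n:ℝ)^m) (hρdef : ρ = ε * m / 4)
    (hC1 : 3072 * (n:ℝ) ≤ ε ^ 4 * (m:ℝ) ^ 2) :
    (n:ℝ) * (2 * (3 * (m:ℝ)^2 * (n:ℝ)^m / ρ^4)) ≤ (n:ℝ)^m / 2 := by
  have hρ4 : ρ^4 = ε^4 * (m:ℝ)^4 / 256 := by rw [hρdef]; ring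
  rw [show (n:ℝ) * (2 * (3 * (m:ℝ)^2 * (n:ℝ)^m / ρ^4)) =
    6 * n * (m:ℝ)^2 * (n:ℝ)^m / ρ^4 from by ring, hρ4,
    div_le_div_iff₀ (show (0:ℝ) < ε^4*(m:ℝ)^4/256 by positivity)
      (show (0:ℝ) < 2 by norm_num)]
  nlinarith [mul_le_mul_of_nonneg_right hC1
    (by positivity : (0:ℝ) ≤ (m:ℝ)^2 * (n:ℝ)^m), hnm0, hmR]

lemma half2_aux (n m : ℕ) (ε ρ : ℝ) (hε0 : 0 < ε) (hmR : (0:ℝ) < m)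
    (hρdef : ρ = ε * m / 4) (hpow : (n:ℝ)^m = n * (n:ℝ)^(m-1))
    (hC2 : 16 * (m:ℝ) ≤ ε * n) :
    (m:ℝ)^2 * (n:ℝ)^(m-1) / ρ ≤ (n:ℝ)^m / 4 := by
  rw [hρdef, hpow, div_le_div_iff₀ (show (0:ℝ) < ε*(m:ℝ)/4 by positivity)
    (show (0:ℝ) < 4 by norm_num)]
  have hnm1 : (0:ℝ) ≤ (n:ℝ)^(m-1) := by positivity
  nlinarith [mul_le_mul_of_nonneg_right hC2
    (by positivity : (0:ℝ) ≤ (m:ℝ) * (n:ℝ)^(m-1)), hmR]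

theorem stmt_15 (c ε : ℝ) (hc : 0 < c) (hε0 : 0 < ε) (hε1 : ε < c / 2) :
    ∃ n₀ : ℕ, ∀ n : ℕ, n₀ ≤ n →
      ∀ R : Fin n → Fin n → Prop,
        -- `R` is an oriented graph: no loops and no 2-cycles
        (∀ u v, R u v → ¬ R v u) →
        (∀ v, (c - ε) * n < (outDeg R v : ℝ) ∧ (outDeg R v : ℝ) < (c + ε) * n ∧
              (c - ε) * n < (inDeg R v : ℝ) ∧ (inDeg R v : ℝ) < (c + ε) * n) →
        ∃ V₀ : Finset (Fin n), V₀.card = ⌈(n : ℝ) ^ ((2 : ℝ) / 3)⌉₊ ∧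
          ∀ v : Fin n,
            (c - 2 * ε) * V₀.card < (Set.ncard {u | u ∈ V₀ ∧ R v u} : ℝ) ∧
            (Set.ncard {u | u ∈ V₀ ∧ R v u} : ℝ) < (c + 2 * ε) * V₀.card ∧
            (c - 2 * ε) * V₀.card < (Set.ncard {u | u ∈ V₀ ∧ R u v} : ℝ) ∧
            (Set.ncard {u | u ∈ V₀ ∧ R u v} : ℝ) < (c + 2 * ε) * V₀.card := by
  classical
  set A : ℝ := 3072 / ε ^ 4 + 32 / ε + 2 with hAdef
  have hA1 : 0 < 3072 / ε ^ 4 := by positivity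
  have hA2 : 0 < 32 / ε := by positivity
  have hA2' : (2:ℝ) ≤ A := by rw [hAdef]; linarith
  have hA0 : 0 < A := by linarith
  refine ⟨⌈A ^ 3⌉₊ + 1, fun n hn R _hR hdeg => ?_⟩
  have hnA : A ^ 3 ≤ (n : ℝ) := by
    calc A ^ 3 ≤ (⌈A ^ 3⌉₊ : ℝ) := Nat.le_ceil _
    _ ≤ n := by exact_mod_cast Nat.le_of_succ_le hn
  have hx8 : (8:ℝ) ≤ n := by
    have h8 : (2:ℝ) ^ 3 ≤ A ^ 3 := pow_le_pow_left₀ (by norm_num) hA2' 3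
    calc (8:ℝ) = 2 ^ 3 := by norm_num
    _ ≤ A ^ 3 := h8
    _ ≤ n := hnA
  have hx0 : (0:ℝ) < n := by linarith
  have hn0 : 0 < n := by exact_mod_cast hx0
  set y : ℝ := (n : ℝ) ^ ((1:ℝ)/3) with hydef
  have hyA : A ≤ y := by
    have h1 : (A ^ 3) ^ ((1:ℝ)/3 : ℝ) ≤ (n:ℝ) ^ ((1:ℝ)/3) :=
      Real.rpow_le_rpow (by positivity) hnA (by norm_num)
    calc A = (A ^ 3) ^ ((1:ℝ)/3 : ℝ) := by
          rw [← Real.rpow_natCast A 3, ← Real.rpow_mul hA0.le]; norm_num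
    _ ≤ y := h1
  have hy0 : 0 < y := lt_of_lt_of_le hA0 hyA
  have hy2 : y ^ 2 = (n : ℝ) ^ ((2:ℝ)/3) := by
    rw [hydef, ← Real.rpow_natCast ((n:ℝ) ^ ((1:ℝ)/3)) 2, ← Real.rpow_mul hx0.le]
    norm_num
  have hy3 : y ^ 3 = n := by
    rw [hydef, ← Real.rpow_natCast ((n:ℝ) ^ ((1:ℝ)/3)) 3, ← Real.rpow_mul hx0.le]
    norm_num
  clear_value y
  set m : ℕ := ⌈(n:ℝ) ^ ((2:ℝ)/3)⌉₊ with hmdef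
  have h23pos : (0:ℝ) < (n:ℝ) ^ ((2:ℝ)/3) := Real.rpow_pos_of_pos hx0 _
  have hm_lo : y ^ 2 ≤ (m : ℝ) := hy2 ▸ Nat.le_ceil _
  have hm_hi : (m:ℝ) < y ^ 2 + 1 := hy2 ▸ Nat.ceil_lt_add_one h23pos.le
  have hm0 : 0 < m := Nat.ceil_pos.mpr h23pos
  clear_value m
  have hmR : (0:ℝ) < m := by exact_mod_cast hm0
  have hy2' : (2:ℝ) ≤ y := le_trans hA2' hyA
  have hmn : m ≤ n := by
    have hmnR : (m:ℝ) < n := by nlinarith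
    exact_mod_cast hmnR.le
  -- key numeric conditions
  have hC1 : 3072 * (n:ℝ) ≤ ε ^ 4 * (m:ℝ) ^ 2 := by
    have h1 : 3072 / ε ^ 4 ≤ y := le_trans (by linarith) hyA
    rw [div_le_iff₀ (by positivity)] at h1
    -- ε^4 * m^2 ≥ ε^4 * y^4 = (ε^4 * y) * y^3 ≥ 3072 * n
    nlinarith [sq_nonneg (y^2), pow_pos hε0 4, hy0, hm_lo, hy3,
      mul_le_mul_of_nonneg_right (mul_le_mul_of_nonneg_left hm_lo (pow_pos hε0 4).le)
        (by positivity : (0:ℝ) ≤ ε ^ 4 * (m:ℝ)^2)]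
  have hC2 : 16 * (m:ℝ) ≤ ε * n := by
    have h1 : 32 / ε ≤ y := le_trans (by linarith) hyA
    rw [div_le_iff₀ hε0] at h1
    -- 16 m ≤ 16 (y² + 1) ≤ 20 y² ≤ (ε y) y² ... careful: need (32 ≤ ε y)
    nlinarith [hy3, hm_hi, hy2', hy0, sq_nonneg y]
  -- neighborhoods
  set Nout : Fin n → Finset (Fin n) := fun v => Finset.univ.filter (fun u => R v u) with hNout
  set Nin : Fin n → Finset (Fin n) := fun v => Finset.univ.filter (fun u => R u v) with hNin
  have houtc : ∀ v, outDeg R v = (Nout v).card := by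
    intro v
    rw [outDeg, show {u | R v u} = ↑(Nout v) from by ext u; simp [hNout],
      Set.ncard_coe_finset]
  have hinc : ∀ v, inDeg R v = (Nin v).card := by
    intro v
    rw [inDeg, show {u | R u v} = ↑(Nin v) from by ext u; simp [hNin],
      Set.ncard_coe_finset]
  set ρ : ℝ := ε * m / 4 with hρdef
  have hρ0 : 0 < ρ := by positivity
  clear_value ρ
  set Bout : Fin n → Finset (Fin m → Fin n) := fun v =>
    Finset.univ.filter fun f =>
      ρ ≤ |∑ i, ((if f i ∈ Nout v then (1:ℝ) else 0) - (Nout v).card / n)| with hBout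
  set Bin : Fin n → Finset (Fin m → Fin n) := fun v =>
    Finset.univ.filter fun f =>
      ρ ≤ |∑ i, ((if f i ∈ Nin v then (1:ℝ) else 0) - (Nin v).card / n)| with hBin
  set Brep : Finset (Fin m → Fin n) :=
    Finset.univ.filter fun f => ρ ≤ (rep f : ℝ) with hBrep
  have hBoutcard : ∀ v, ((Bout v).card : ℝ) ≤ 3 * (m:ℝ)^2 * (n:ℝ)^m / ρ^4 := by
    intro v
    rw [le_div_iff₀ (by positivity)]
    exact bad_card hn0 (Nout v) ρ hρ0
  have hBincard : ∀ v, ((Bin v).card : ℝ) ≤ 3 * (m:ℝ)^2 * (n:ℝ)^m / ρ^4 := by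
    intro v
    rw [le_div_iff₀ (by positivity)]
    exact bad_card hn0 (Nin v) ρ hρ0
  have hBrepcard : (Brep.card : ℝ) ≤ (m:ℝ)^2 * (n:ℝ)^(m-1) / ρ := by
    rw [le_div_iff₀ hρ0]
    exact repbad_card ρ hρ0
  set bad : Finset (Fin m → Fin n) :=
    (Finset.univ.biUnion fun v => Bout v ∪ Bin v) ∪ Brep with hbad
  have hpow : (n:ℝ)^m = n * (n:ℝ)^(m-1) := by
    rw [← pow_succ']
    congr 1
    omega
  have hnm0 : (0:ℝ) < (n:ℝ)^m := by positivity
  have hbadlt : (bad.card : ℝ) < (n:ℝ)^m := by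
    have hb1 : bad.card ≤ (∑ v : Fin n, ((Bout v).card + (Bin v).card)) + Brep.card := by
      refine (Finset.card_union_le _ _).trans ?_
      refine Nat.add_le_add_right ?_ _
      refine (Finset.card_biUnion_le).trans ?_
      exact Finset.sum_le_sum fun v _ => Finset.card_union_le _ _
    have hb2 : ((∑ v : Fin n, ((Bout v).card + (Bin v).card) : ℕ) : ℝ) ≤
        (n:ℝ) * (2 * (3 * (m:ℝ)^2 * (n:ℝ)^m / ρ^4)) := by
      push_cast
      calc ∑ v : Fin n, (((Bout v).card : ℝ) + ((Bin v).card : ℝ))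
          ≤ ∑ _v : Fin n, (3 * (m:ℝ)^2 * (n:ℝ)^m / ρ^4 + 3 * (m:ℝ)^2 * (n:ℝ)^m / ρ^4) :=
            Finset.sum_le_sum fun v _ => add_le_add (hBoutcard v) (hBincard v)
      _ = (n:ℝ) * (2 * (3 * (m:ℝ)^2 * (n:ℝ)^m / ρ^4)) := by
            rw [Finset.sum_const, Finset.card_univ, Fintype.card_fin, nsmul_eq_mul]
            ring
    have hhalf1 : (n:ℝ) * (2 * (3 * (m:ℝ)^2 * (n:ℝ)^m / ρ^4)) ≤ (n:ℝ)^m / 2 :=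
      half1_aux n m ε ρ hε0 hmR hnm0 hρdef hC1
    have hhalf2 : (m:ℝ)^2 * (n:ℝ)^(m-1) / ρ ≤ (n:ℝ)^m / 4 :=
      half2_aux n m ε ρ hε0 hmR hρdef hpow hC2
    calc (bad.card : ℝ) ≤ ((∑ v : Fin n, ((Bout v).card + (Bin v).card) : ℕ) : ℝ) +
          (Brep.card : ℝ) := by exact_mod_cast hb1
    _ ≤ (n:ℝ)^m / 2 + (n:ℝ)^m / 4 := add_le_add (hb2.trans hhalf1) (hBrepcard.trans hhalf2)
    _ < (n:ℝ)^m := by linarith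
  have hbadcard : bad.card < n ^ m := by exact_mod_cast hbadlt
  have huniv : (Finset.univ : Finset (Fin m → Fin n)).card = n ^ m := by
    simp [Fintype.card_fun]
  have hne : (Finset.univ \ bad).Nonempty := by
    rw [← Finset.card_pos, Finset.card_sdiff_of_subset (Finset.subset_univ _), huniv]
    omega
  obtain ⟨f, hf⟩ := hne
  have hfbad : f ∉ bad := (Finset.mem_sdiff.mp hf).2
  have hfrep : (rep f : ℝ) < ρ := by
    by_contra h
    push_neg at h
    exact hfbad (Finset.mem_union_right _ (Finset.mem_filter.mpr ⟨Finset.mem_univ _, h⟩))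
  have hfout : ∀ v, |∑ i, ((if f i ∈ Nout v then (1:ℝ) else 0) - (Nout v).card / n)| < ρ := by
    intro v
    by_contra h
    push_neg at h
    exact hfbad (Finset.mem_union_left _ (Finset.mem_biUnion.mpr ⟨v, Finset.mem_univ _,
      Finset.mem_union_left _ (Finset.mem_filter.mpr ⟨Finset.mem_univ _, h⟩)⟩))
  have hfin : ∀ v, |∑ i, ((if f i ∈ Nin v then (1:ℝ) else 0) - (Nin v).card / n)| < ρ := by
    intro v
    by_contra h
    push_neg at h
    exact hfbad (Finset.mem_union_left _ (Finset.mem_biUnion.mpr ⟨v, Finset.mem_univ _,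
      Finset.mem_union_right _ (Finset.mem_filter.mpr ⟨Finset.mem_univ _, h⟩)⟩))
  have hfrep' : (rep f : ℝ) < ε * m / 4 := by rw [← hρdef]; exact hfrep
  have hfout' : ∀ v, |∑ i, ((if f i ∈ Nout v then (1:ℝ) else 0) - (Nout v).card / n)| <
      ε * m / 4 := by
    intro v
    rw [← hρdef]
    exact hfout v
  have hfin' : ∀ v, |∑ i, ((if f i ∈ Nin v then (1:ℝ) else 0) - (Nin v).card / n)| <
      ε * m / 4 := by
    intro v
    rw [← hρdef]
    exact hfin v
  clear hfbad hf hbadcard hbadlt huniv hfrep hfout hfin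
  clear hBoutcard hBincard hBrepcard
  clear hbad bad hBrep Brep hBout Bout hBin Bin
  have himgcard : (Finset.image f Finset.univ).card ≤ m :=
    Finset.card_image_le.trans (by simp)
  obtain ⟨V₀, hV₀sub, hV₀card⟩ := Finset.exists_superset_card_eq himgcard (by simpa using hmn)
  refine ⟨V₀, hV₀card, fun v => ?_⟩
  have e_out : {u | u ∈ V₀ ∧ R v u} = ↑(V₀ ∩ Nout v) := by
    ext u
    simp [hNout]
  have e_in : {u | u ∈ V₀ ∧ R u v} = ↑(V₀ ∩ Nin v) := by
    ext u
    simp [hNin]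
  rw [e_out, e_in, Set.ncard_coe_finset, Set.ncard_coe_finset, hV₀card]
  obtain ⟨hd1, hd2, hd3, hd4⟩ := hdeg v
  rw [houtc v] at hd1 hd2
  rw [hinc v] at hd3 hd4
  have gout := good_count hn0 hm0 c ε hε0 f V₀ (Nout v) hV₀sub hV₀card hd1 hd2
    (hfout' v) hfrep'
  have gin := good_count hn0 hm0 c ε hε0 f V₀ (Nin v) hV₀sub hV₀card hd3 hd4
    (hfin' v) hfrep'
  exact ⟨gout.1, gout.2, gin.1, gin.2⟩
end

section
/- Let G be an oriented graph on n vertices with δ±(G) ≥ 3n/8. Then for every ordered pair of distinct vertices x, y of G there exists a directed path in G from x to y of length at most 4. -/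
open Finset in
lemma two_sum_le {V : Type*} [Fintype V] [DecidableEq V]
    (R : V → V → Prop) [DecidableRel R]
    (horient : ∀ u v, R u v → ¬ R v u) (A : Finset V) :
    2 * ∑ a ∈ A, (A.filter (fun u => R a u)).card ≤ A.card * (A.card - 1) := by
  have hswap : ∑ a ∈ A, (A.filter (fun u => R a u)).card
      = ∑ a ∈ A, (A.filter (fun u => R u a)).card := by
    simp only [Finset.card_filter]
    rw [Finset.sum_comm]
  have key : ∀ a ∈ A, (A.filter (fun u => R a u)).card + (A.filter (fun u => R u a)).card
      ≤ A.card - 1 := by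
    intro a ha
    have hdisj : Disjoint (A.filter (fun u => R a u)) (A.filter (fun u => R u a)) := by
      rw [Finset.disjoint_left]
      intro u h1 h2
      exact horient a u (Finset.mem_filter.mp h1).2 (Finset.mem_filter.mp h2).2
    rw [← Finset.card_union_of_disjoint hdisj]
    have hsub : (A.filter (fun u => R a u)) ∪ (A.filter (fun u => R u a)) ⊆ A.erase a := by
      intro u hu
      simp only [Finset.mem_union, Finset.mem_filter] at hu
      rcases hu with ⟨hu, h⟩ | ⟨hu, h⟩
      · exact Finset.mem_erase.mpr ⟨fun he => horient a a (he ▸ h) (he ▸ h), hu⟩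
      · exact Finset.mem_erase.mpr ⟨fun he => horient a a (he ▸ h) (he ▸ h), hu⟩
    calc _ ≤ (A.erase a).card := Finset.card_le_card hsub
    _ = A.card - 1 := Finset.card_erase_of_mem ha
  calc 2 * ∑ a ∈ A, (A.filter (fun u => R a u)).card
      = ∑ a ∈ A, ((A.filter (fun u => R a u)).card + (A.filter (fun u => R u a)).card) := by
        rw [Finset.sum_add_distrib, ← hswap]; ring
    _ ≤ ∑ _a ∈ A, (A.card - 1) := Finset.sum_le_sum key
    _ = A.card * (A.card - 1) := by rw [Finset.sum_const, smul_eq_mul]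

theorem stmt_16 {n : ℕ} (R : Fin n → Fin n → Prop)
    -- `R` is an oriented graph: no loops and no 2-cycles
    (horient : ∀ u v, R u v → ¬ R v u)
    -- minimum semi-degree at least 3n/8
    (hdeg : ∀ v, 3 * (n : ℝ) / 8 ≤ (outDeg R v : ℝ) ∧ 3 * (n : ℝ) / 8 ≤ (inDeg R v : ℝ))
    (x y : Fin n) (hxy : x ≠ y) :
    -- a directed path from x to y with at most 4 edges
    ∃ l : List (Fin n), l.Nodup ∧ l.Chain' R ∧
      l.head? = some x ∧ l.getLast? = some y ∧ l.length ≤ 5 := by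
  classical
  have hirr : ∀ v, ¬ R v v := fun v h => horient v v h h
  -- translate degrees to Finset cards
  have houtD : ∀ v, outDeg R v = (Finset.univ.filter (fun u => R v u)).card := by
    intro v
    have : {u | R v u} = ↑(Finset.univ.filter (fun u => R v u)) := by ext u; simp
    rw [outDeg, this, Set.ncard_coe_finset]
  have hinD : ∀ v, inDeg R v = (Finset.univ.filter (fun u => R u v)).card := by
    intro v
    have : {u | R u v} = ↑(Finset.univ.filter (fun u => R u v)) := by ext u; simp
    rw [inDeg, this, Set.ncard_coe_finset]
  by_cases h1 : R x y
  · exact ⟨[x, y], by simp [hxy], by simp [List.Chain', h1], rfl, rfl, by norm_num⟩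
  by_cases h2 : ∃ z, R x z ∧ R z y
  · obtain ⟨z, hz1, hz2⟩ := h2
    have hzx : z ≠ x := fun h => hirr x (h ▸ hz1)
    have hzy : z ≠ y := fun h => hirr y (h ▸ hz2)
    exact ⟨[x, z, y], by simp [hxy, hzx.symm, hzy], by simp [List.Chain', hz1, hz2], rfl, rfl, by norm_num⟩
  by_cases h3 : ∃ a b, R x a ∧ R a b ∧ R b y
  · obtain ⟨a, b, ha, hab, hb⟩ := h3
    have hax : a ≠ x := fun h => hirr x (h ▸ ha)
    have hay : a ≠ y := fun h => h1 (h ▸ ha)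
    have hbx : b ≠ x := fun h => h1 (h ▸ hb)
    have hby : b ≠ y := fun h => hirr y (h ▸ hb)
    have hab' : a ≠ b := fun h => hirr a (h ▸ hab)
    exact ⟨[x, a, b, y], by simp [hxy, hax.symm, hay, hbx.symm, hby, hab'],
      by simp [List.Chain', ha, hab, hb], rfl, rfl, by norm_num⟩
  by_cases h4 : ∃ a c b, R x a ∧ R a c ∧ R c b ∧ R b y
  · obtain ⟨a, c, b, ha, hac, hcb, hb⟩ := h4
    have hax : a ≠ x := fun h => hirr x (h ▸ ha)
    have hay : a ≠ y := fun h => h1 (h ▸ ha)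
    have hbx : b ≠ x := fun h => h1 (h ▸ hb)
    have hby : b ≠ y := fun h => hirr y (h ▸ hb)
    have hab' : a ≠ b := fun h => horient a c hac (by rw [h]; exact hcb)
    have hca : c ≠ a := fun h => hirr a (h ▸ hac)
    have hcb' : c ≠ b := fun h => hirr b (h ▸ hcb)
    have hcx : c ≠ x := fun h => horient x a ha (h ▸ hac)
    have hcy : c ≠ y := fun h => horient b y hb (h ▸ hcb)
    exact ⟨[x, a, c, b, y],
      by simp [hxy, hax.symm, hay, hbx.symm, hby, hab', hca.symm, hcb', hcx.symm, hcy],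
      by simp [List.Chain', ha, hac, hcb, hb], rfl, rfl, by norm_num⟩
  -- counting contradiction
  exfalso
  have hn2 : 2 ≤ n := by
    have : Nontrivial (Fin n) := ⟨x, y, hxy⟩
    have := Fintype.one_lt_card (α := Fin n)
    have h' : 1 < n := by simpa using this
    omega
  set A := Finset.univ.filter (fun u => R x u) with hA
  set B := Finset.univ.filter (fun u => R u y) with hB
  set C := Finset.univ.filter (fun u => ¬ R x u ∧ ¬ R u y ∧ u ≠ x ∧ u ≠ y) with hC
  set C1 := C.filter (fun c => ∃ b ∈ B, R c b) with hC1
  set C2 := C.filter (fun c => ∃ a ∈ A, R a c) with hC2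
  have hmemA : ∀ u, u ∈ A ↔ R x u := by intro u; simp [hA]
  have hmemB : ∀ u, u ∈ B ↔ R u y := by intro u; simp [hB]
  have hmemC : ∀ u, u ∈ C ↔ (¬ R x u ∧ ¬ R u y ∧ u ≠ x ∧ u ≠ y) := by intro u; simp [hC]
  -- degree lower bounds
  have hαR : 3 * (n : ℝ) / 8 ≤ (A.card : ℝ) := by
    have := (hdeg x).1; rwa [houtD x] at this
  have hβR : 3 * (n : ℝ) / 8 ≤ (B.card : ℝ) := by
    have := (hdeg y).2; rwa [hinD y] at this
  have hnpos : (0:ℝ) < 3 * (n:ℝ) / 8 := by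
    have : (2:ℝ) ≤ (n:ℝ) := by exact_mod_cast hn2
    linarith
  have hαpos : (0:ℝ) < (A.card : ℝ) := lt_of_lt_of_le hnpos hαR
  have hβpos : (0:ℝ) < (B.card : ℝ) := lt_of_lt_of_le hnpos hβR
  have hA1 : 1 ≤ A.card := by
    by_contra h
    push_neg at h
    interval_cases h' : A.card
    · simp [h'] at hαpos
  have hB1 : 1 ≤ B.card := by
    by_contra h
    push_neg at h
    interval_cases h' : B.card
    · simp [h'] at hβpos
  -- disjointness and the partition bound
  have hxA : x ∉ A := fun h => hirr x ((hmemA x).mp h)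
  have hyA : y ∉ A := fun h => h1 ((hmemA y).mp h)
  have hxB : x ∉ B := fun h => h1 ((hmemB x).mp h)
  have hyB : y ∉ B := fun h => hirr y ((hmemB y).mp h)
  have hAB : Disjoint A B := by
    rw [Finset.disjoint_left]
    intro u hu hu'
    exact h2 ⟨u, (hmemA u).mp hu, (hmemB u).mp hu'⟩
  have hAC : Disjoint A C := by
    rw [Finset.disjoint_left]
    intro u hu hu'
    exact ((hmemC u).mp hu').1 ((hmemA u).mp hu)
  have hBC : Disjoint B C := by
    rw [Finset.disjoint_left]
    intro u hu hu'
    exact ((hmemC u).mp hu').2.1 ((hmemB u).mp hu)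
  have hcard_union : A.card + B.card + C.card + 2 ≤ n := by
    have hd1 : Disjoint (A ∪ B ∪ C) ({x, y} : Finset (Fin n)) := by
      rw [Finset.disjoint_right]
      intro u hu
      simp only [Finset.mem_insert, Finset.mem_singleton] at hu
      rcases hu with rfl | rfl
      · simp only [Finset.mem_union]
        push_neg
        exact ⟨⟨hxA, hxB⟩, fun h => ((hmemC u).mp h).2.2.1 rfl⟩
      · simp only [Finset.mem_union]
        push_neg
        exact ⟨⟨hyA, hyB⟩, fun h => ((hmemC u).mp h).2.2.2 rfl⟩
    have hd2 : Disjoint (A ∪ B) C := by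
      rw [Finset.disjoint_union_left]; exact ⟨hAC, hBC⟩
    have e1 : (A ∪ B ∪ C ∪ {x, y}).card = A.card + B.card + C.card + 2 := by
      rw [Finset.card_union_of_disjoint hd1, Finset.card_union_of_disjoint hd2,
        Finset.card_union_of_disjoint hAB, Finset.card_pair hxy]
    calc A.card + B.card + C.card + 2 = (A ∪ B ∪ C ∪ {x, y}).card := e1.symm
      _ ≤ Finset.univ.card := Finset.card_le_univ _
      _ = n := by simp
  -- C1 and C2 are disjoint subsets of C
  have hC12 : C1.card + C2.card ≤ C.card := by
    have hd : Disjoint C1 C2 := by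
      rw [Finset.disjoint_left]
      intro c hc1 hc2
      obtain ⟨hcC, b, hbB, hcb⟩ := Finset.mem_filter.mp hc1
      obtain ⟨-, a, haA, hac⟩ := Finset.mem_filter.mp hc2
      exact h4 ⟨a, c, b, (hmemA a).mp haA, hac, hcb, (hmemB b).mp hbB⟩
    rw [← Finset.card_union_of_disjoint hd]
    apply Finset.card_le_card
    rw [Finset.union_subset_iff]
    exact ⟨Finset.filter_subset _ _, Finset.filter_subset _ _⟩
  -- out-side counting
  have houtsplit : ∀ a ∈ A, (Finset.univ.filter (fun u => R a u)).card ≤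
      (A.filter (fun u => R a u)).card + (C.filter (fun u => R a u)).card := by
    intro a haA
    have hxa : R x a := (hmemA a).mp haA
    rw [← Finset.card_union_of_disjoint (Finset.disjoint_filter_filter hAC)]
    apply Finset.card_le_card
    intro u hu
    have hau : R a u := (Finset.mem_filter.mp hu).2
    rw [← Finset.filter_union, Finset.mem_filter, Finset.mem_union]
    refine ⟨?_, hau⟩
    by_cases hxu : R x u
    · exact Or.inl ((hmemA u).mpr hxu)
    · refine Or.inr ((hmemC u).mpr ⟨hxu, ?_, ?_, ?_⟩)
      · exact fun huy => h3 ⟨a, u, hxa, hau, huy⟩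
      · exact fun h => horient x a hxa (by rw [h] at hau; exact hau)
      · exact fun h => h2 ⟨a, hxa, by rw [h] at hau; exact hau⟩
  have hsumA : (A.card : ℝ) * (3 * (n:ℝ) / 8) ≤
      (∑ a ∈ A, (A.filter (fun u => R a u)).card : ℕ) +
      (∑ a ∈ A, (C.filter (fun u => R a u)).card : ℕ) := by
    have step1 : A.card • (3 * (n:ℝ) / 8) ≤
        ∑ a ∈ A, ((Finset.univ.filter (fun u => R a u)).card : ℝ) := by
      apply Finset.card_nsmul_le_sum
      intro a _
      have := (hdeg a).1; rwa [houtD a] at this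
    have step2 : (∑ a ∈ A, (Finset.univ.filter (fun u => R a u)).card) ≤
        (∑ a ∈ A, (A.filter (fun u => R a u)).card) +
        (∑ a ∈ A, (C.filter (fun u => R a u)).card) := by
      rw [← Finset.sum_add_distrib]
      exact Finset.sum_le_sum houtsplit
    rw [nsmul_eq_mul] at step1
    calc (A.card : ℝ) * (3 * (n:ℝ) / 8)
        ≤ ∑ a ∈ A, ((Finset.univ.filter (fun u => R a u)).card : ℝ) := step1
      _ = ((∑ a ∈ A, (Finset.univ.filter (fun u => R a u)).card : ℕ) : ℝ) := by
          push_cast; ring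
      _ ≤ _ := by exact_mod_cast step2
  have hs1 : 2 * (∑ a ∈ A, (A.filter (fun u => R a u)).card) ≤ A.card * (A.card - 1) :=
    two_sum_le R horient A
  have hsC2 : (∑ a ∈ A, (C.filter (fun u => R a u)).card) ≤ A.card * C2.card := by
    calc (∑ a ∈ A, (C.filter (fun u => R a u)).card) ≤ ∑ _a ∈ A, C2.card := by
          apply Finset.sum_le_sum
          intro a haA
          apply Finset.card_le_card
          intro u hu
          obtain ⟨huC, hau⟩ := Finset.mem_filter.mp hu
          exact Finset.mem_filter.mpr ⟨huC, a, haA, hau⟩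
      _ = A.card * C2.card := by rw [Finset.sum_const, smul_eq_mul]
  -- in-side counting
  have hinsplit : ∀ b ∈ B, (Finset.univ.filter (fun u => R u b)).card ≤
      (B.filter (fun u => R u b)).card + (C.filter (fun u => R u b)).card := by
    intro b hbB
    have hby : R b y := (hmemB b).mp hbB
    rw [← Finset.card_union_of_disjoint (Finset.disjoint_filter_filter hBC)]
    apply Finset.card_le_card
    intro u hu
    have hub : R u b := (Finset.mem_filter.mp hu).2
    rw [← Finset.filter_union, Finset.mem_filter, Finset.mem_union]
    refine ⟨?_, hub⟩
    by_cases huy : R u y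
    · exact Or.inl ((hmemB u).mpr huy)
    · refine Or.inr ((hmemC u).mpr ⟨?_, huy, ?_, ?_⟩)
      · exact fun hxu => h3 ⟨u, b, hxu, hub, hby⟩
      · exact fun h => h2 ⟨b, by rw [h] at hub; exact hub, hby⟩
      · exact fun h => horient b y hby (by rw [h] at hub; exact hub)
  have hsumB : (B.card : ℝ) * (3 * (n:ℝ) / 8) ≤
      (∑ b ∈ B, (B.filter (fun u => R u b)).card : ℕ) +
      (∑ b ∈ B, (C.filter (fun u => R u b)).card : ℕ) := by
    have step1 : B.card • (3 * (n:ℝ) / 8) ≤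
        ∑ b ∈ B, ((Finset.univ.filter (fun u => R u b)).card : ℝ) := by
      apply Finset.card_nsmul_le_sum
      intro b _
      have := (hdeg b).2; rwa [hinD b] at this
    have step2 : (∑ b ∈ B, (Finset.univ.filter (fun u => R u b)).card) ≤
        (∑ b ∈ B, (B.filter (fun u => R u b)).card) +
        (∑ b ∈ B, (C.filter (fun u => R u b)).card) := by
      rw [← Finset.sum_add_distrib]
      exact Finset.sum_le_sum hinsplit
    rw [nsmul_eq_mul] at step1
    calc (B.card : ℝ) * (3 * (n:ℝ) / 8)
        ≤ ∑ b ∈ B, ((Finset.univ.filter (fun u => R u b)).card : ℝ) := step1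
      _ = ((∑ b ∈ B, (Finset.univ.filter (fun u => R u b)).card : ℕ) : ℝ) := by
          push_cast; ring
      _ ≤ _ := by exact_mod_cast step2
  have ht1 : 2 * (∑ b ∈ B, (B.filter (fun u => R u b)).card) ≤ B.card * (B.card - 1) := by
    have := two_sum_le (fun u v => R v u) (fun u v h h' => horient v u h h') B
    simpa using this
  have htC1 : (∑ b ∈ B, (C.filter (fun u => R u b)).card) ≤ B.card * C1.card := by
    calc (∑ b ∈ B, (C.filter (fun u => R u b)).card) ≤ ∑ _b ∈ B, C1.card := by
          apply Finset.sum_le_sum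
          intro b hbB
          apply Finset.card_le_card
          intro u hu
          obtain ⟨huC, hub⟩ := Finset.mem_filter.mp hu
          exact Finset.mem_filter.mpr ⟨huC, b, hbB, hub⟩
      _ = B.card * C1.card := by rw [Finset.sum_const, smul_eq_mul]
  -- assemble over ℝ
  have hs1R : 2 * ((∑ a ∈ A, (A.filter (fun u => R a u)).card : ℕ) : ℝ) ≤
      (A.card : ℝ) * ((A.card : ℝ) - 1) := by
    have : ((A.card * (A.card - 1) : ℕ) : ℝ) = (A.card : ℝ) * ((A.card : ℝ) - 1) := by
      push_cast [Nat.cast_sub hA1]; ring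
    rw [← this]
    exact_mod_cast hs1
  have ht1R : 2 * ((∑ b ∈ B, (B.filter (fun u => R u b)).card : ℕ) : ℝ) ≤
      (B.card : ℝ) * ((B.card : ℝ) - 1) := by
    have : ((B.card * (B.card - 1) : ℕ) : ℝ) = (B.card : ℝ) * ((B.card : ℝ) - 1) := by
      push_cast [Nat.cast_sub hB1]; ring
    rw [← this]
    exact_mod_cast ht1
  have hsC2R : ((∑ a ∈ A, (C.filter (fun u => R a u)).card : ℕ) : ℝ) ≤
      (A.card : ℝ) * (C2.card : ℝ) := by exact_mod_cast hsC2
  have htC1R : ((∑ b ∈ B, (C.filter (fun u => R u b)).card : ℕ) : ℝ) ≤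
      (B.card : ℝ) * (C1.card : ℝ) := by exact_mod_cast htC1
  have d1 : 3 * (n:ℝ) / 8 ≤ ((A.card : ℝ) - 1) / 2 + (C2.card : ℝ) := by
    nlinarith [hsumA, hs1R, hsC2R, hαpos]
  have d2 : 3 * (n:ℝ) / 8 ≤ ((B.card : ℝ) - 1) / 2 + (C1.card : ℝ) := by
    nlinarith [hsumB, ht1R, htC1R, hβpos]
  have hγR : (A.card : ℝ) + (B.card : ℝ) + (C.card : ℝ) + 2 ≤ (n : ℝ) := by
    exact_mod_cast hcard_union
  have hC12R : (C1.card : ℝ) + (C2.card : ℝ) ≤ (C.card : ℝ) := by exact_mod_cast hC12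
  linarith [d1, d2, hγR, hC12R, hαR, hβR]
end

section
/- Let A be an n×n matrix with all entries 0 or 1, and for each i let r_i denote the number of ones in the i-th row of A. Then per(A) ≤ ∏_{i=1}^{n} (r_i!)^{1/r_i}, where factors with r_i = 0 are interpreted as 1. -/
open Finset Real

namespace Bregman


variable {α : Type*} [Fintype α] [DecidableEq α]

def okSet (I : Finset α) (R : α → Finset α) : Finset (α → Option α) :=
  univ.filter fun f => (∀ a, a ∉ I → f a = none) ∧ (∀ a ∈ I, ∃ b ∈ R a, f a = some b)
    ∧ (∀ a ∈ I, ∀ b ∈ I, f a = f b → a = b)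

lemma mem_okSet {I : Finset α} {R : α → Finset α} {f : α → Option α} :
    f ∈ okSet I R ↔ (∀ a, a ∉ I → f a = none) ∧ (∀ a ∈ I, ∃ b ∈ R a, f a = some b)
    ∧ (∀ a ∈ I, ∀ b ∈ I, f a = f b → a = b) := by
  simp [okSet]

/-- the value function -/
def vf (f : α → Option α) (a : α) : α := (f a).getD a

lemma vf_spec {I : Finset α} {R : α → Finset α} {f : α → Option α} (hf : f ∈ okSet I R)
    {a : α} (ha : a ∈ I) : f a = some (vf f a) ∧ vf f a ∈ R a := by
  obtain ⟨-, h2, -⟩ := mem_okSet.1 hf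
  obtain ⟨b, hb, hfb⟩ := h2 a ha
  simp [vf, hfb, hb]

lemma card_fiber (I : Finset α) (R : α → Finset α) {i : α} (hi : i ∈ I) {k : α} (hk : k ∈ R i) :
    ((okSet I R).filter (fun f => f i = some k)).card
      = (okSet (I.erase i) (fun a => (R a).erase k)).card := by
  apply Finset.card_bij (fun f _ => Function.update f i none)
  · rintro f hf
    rw [Finset.mem_filter] at hf
    obtain ⟨hf, hfi⟩ := hf
    obtain ⟨h1, h2, h3⟩ := mem_okSet.1 hf
    rw [mem_okSet]
    refine ⟨?_, ?_, ?_⟩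
    · intro a ha
      rcases eq_or_ne a i with rfl | hai
      · simp
      · rw [Function.update_of_ne hai]
        exact h1 a (fun haI => ha (Finset.mem_erase.2 ⟨hai, haI⟩))
    · intro a ha
      obtain ⟨hai, haI⟩ := Finset.mem_erase.1 ha
      obtain ⟨b, hb, hfb⟩ := h2 a haI
      refine ⟨b, Finset.mem_erase.2 ⟨?_, hb⟩, by rw [Function.update_of_ne hai]; exact hfb⟩
      rintro rfl
      exact hai (h3 a haI i hi (by rw [hfb, hfi]))
    · intro a ha b hb hab
      obtain ⟨hai, haI⟩ := Finset.mem_erase.1 ha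
      obtain ⟨hbi, hbI⟩ := Finset.mem_erase.1 hb
      rw [Function.update_of_ne hai, Function.update_of_ne hbi] at hab
      exact h3 a haI b hbI hab
  · intro f hf g hg h
    rw [Finset.mem_filter] at hf hg
    funext a
    rcases eq_or_ne a i with rfl | hai
    · rw [hf.2, hg.2]
    · have := congrFun h a
      rwa [Function.update_of_ne hai, Function.update_of_ne hai] at this
  · intro g hg
    obtain ⟨h1, h2, h3⟩ := mem_okSet.1 hg
    refine ⟨Function.update g i (some k), ?_, ?_⟩
    · rw [Finset.mem_filter, mem_okSet]
      refine ⟨⟨?_, ?_, ?_⟩, by simp⟩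
      · intro a ha
        have hai : a ≠ i := fun h => ha (h ▸ hi)
        rw [Function.update_of_ne hai]
        exact h1 a (fun haI => ha (Finset.mem_of_mem_erase haI))
      · intro a ha
        rcases eq_or_ne a i with rfl | hai
        · exact ⟨k, hk, by simp⟩
        · obtain ⟨b, hb, hgb⟩ := h2 a (Finset.mem_erase.2 ⟨hai, ha⟩)
          exact ⟨b, Finset.mem_of_mem_erase hb, by rw [Function.update_of_ne hai]; exact hgb⟩
      · intro a ha b hb hab
        by_cases hai : a = i <;> by_cases hbi : b = i
        · rw [hai, hbi]
        · exfalso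
          rw [hai, Function.update_self, Function.update_of_ne hbi] at hab
          obtain ⟨c, hc, hgc⟩ := h2 b (Finset.mem_erase.2 ⟨hbi, hb⟩)
          rw [hgc] at hab
          rw [← Option.some_inj.1 hab] at hc
          exact (Finset.mem_erase.1 hc).1 rfl
        · exfalso
          rw [hbi, Function.update_self, Function.update_of_ne hai] at hab
          obtain ⟨c, hc, hgc⟩ := h2 a (Finset.mem_erase.2 ⟨hai, ha⟩)
          rw [hgc] at hab
          rw [← Option.some_inj.1 hab.symm] at hc
          exact (Finset.mem_erase.1 hc).1 rfl
        · rw [Function.update_of_ne hai, Function.update_of_ne hbi] at hab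
          exact h3 a (Finset.mem_erase.2 ⟨hai, ha⟩) b (Finset.mem_erase.2 ⟨hbi, hb⟩) hab
    · funext a
      rcases eq_or_ne a i with rfl | hai
      · rw [Function.update_self, h1 a (fun h => (Finset.mem_erase.1 h).1 rfl)]
      · rw [Function.update_of_ne hai, Function.update_of_ne hai]

lemma card_okSet_eq_sum (I : Finset α) (R : α → Finset α) {i : α} (hi : i ∈ I) :
    (okSet I R).card = ∑ k ∈ R i, ((okSet I R).filter (fun f => f i = some k)).card := by
  apply Finset.card_eq_sum_card_fiberwise (f := fun f => vf f i)
    (fun f hf => (vf_spec hf hi).2) |>.trans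
  apply Finset.sum_congr rfl
  intro k _
  congr 1
  apply Finset.filter_congr
  intro f hf
  obtain ⟨hsome, -⟩ := vf_spec hf hi
  simp [hsome]


noncomputable def bf (r : ℕ) : ℝ := (r.factorial : ℝ) ^ ((1:ℝ)/(r:ℝ))

lemma bf_pos (r : ℕ) : 0 < bf r :=
  Real.rpow_pos_of_pos (by exact_mod_cast r.factorial_pos) _

lemma one_le_bf (r : ℕ) : 1 ≤ bf r :=
  Real.one_le_rpow (by exact_mod_cast r.factorial_pos) (by positivity)

lemma bf_pow_self (r : ℕ) : bf r ^ r = (r.factorial : ℝ) := by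
  rcases Nat.eq_zero_or_pos r with h | h
  · simp [h]
  · rw [bf, ← Real.rpow_natCast ((r.factorial : ℝ) ^ ((1:ℝ)/(r:ℝ))) r,
      ← Real.rpow_mul (by positivity), one_div_mul_cancel (by exact_mod_cast h.ne' : (r:ℝ) ≠ 0),
      Real.rpow_one]

lemma okSet_empty {α : Type*} [Fintype α] [DecidableEq α] (R : α → Finset α) :
    okSet (∅ : Finset α) R = {fun _ => none} := by
  ext f
  simp only [mem_okSet, Finset.notMem_empty, Finset.mem_singleton]
  constructor
  · rintro ⟨h, -, -⟩; funext a; exact h a (by simp)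
  · rintro rfl; simp



lemma pow_self_eq_exp (n : ℕ) : ((n : ℝ)) ^ n = Real.exp ((n : ℝ) * Real.log n) := by
  rcases Nat.eq_zero_or_pos n with rfl | h
  · simp
  · rw [← Real.exp_log (show (0:ℝ) < (n:ℝ)^n from pow_pos (by exact_mod_cast h) n),
      Real.log_pow]

lemma amgm {ι : Type*} (s : Finset ι) (hs : s.Nonempty) (t : ι → ℕ) :
    ((∑ k ∈ s, t k : ℕ) : ℝ) ^ (∑ k ∈ s, t k) ≤
      (s.card : ℝ) ^ (∑ k ∈ s, t k) * ∏ k ∈ s, (t k : ℝ) ^ (t k) := by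
  set p : ℕ := ∑ k ∈ s, t k with hp
  have hcard : (0:ℝ) < s.card := by exact_mod_cast Finset.card_pos.2 hs
  have hprod : ∏ k ∈ s, (t k : ℝ) ^ (t k) = Real.exp (∑ k ∈ s, (t k : ℝ) * Real.log (t k)) := by
    rw [Real.exp_sum]
    exact Finset.prod_congr rfl fun k _ => pow_self_eq_exp (t k)
  rcases Nat.eq_zero_or_pos p with h0 | hppos
  · rw [h0]
    have hz : ∀ k ∈ s, t k = 0 := Finset.sum_eq_zero_iff.1 h0
    simp only [pow_zero]
    rw [Finset.prod_congr rfl (fun k hk => by rw [hz k hk] : ∀ k ∈ s, ((t k : ℝ)) ^ (t k) = ((0:ℕ):ℝ)^(0:ℕ))]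
    simp
  · have hppos' : (0:ℝ) < p := by exact_mod_cast hppos
    -- Jensen
    have jensen := Real.convexOn_mul_log.map_sum_le (t := s) (w := fun _ => (s.card : ℝ)⁻¹)
      (p := fun k => (t k : ℝ)) (fun _ _ => by positivity)
      (by rw [Finset.sum_const, nsmul_eq_mul, mul_inv_cancel₀ hcard.ne'])
      (fun k _ => Set.mem_Ici.2 (by positivity))
    have hsum : ∑ k ∈ s, (s.card : ℝ)⁻¹ • (t k : ℝ) = (p : ℝ) / s.card := by
      rw [← Finset.smul_sum]
      push_cast [hp]
      rw [smul_eq_mul, inv_mul_eq_div]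
    rw [hsum] at jensen
    have jensen2 : (p : ℝ) * Real.log ((p : ℝ) / s.card) ≤
        ∑ k ∈ s, (t k : ℝ) * Real.log (t k) := by
      have h2 : ∑ k ∈ s, (s.card : ℝ)⁻¹ • ((t k : ℝ) * Real.log (t k)) =
          (s.card : ℝ)⁻¹ * ∑ k ∈ s, (t k : ℝ) * Real.log (t k) := by
        rw [← Finset.smul_sum]; rfl
      rw [h2] at jensen
      have := mul_le_mul_of_nonneg_left jensen hcard.le
      rw [← mul_assoc, ← mul_assoc, mul_inv_cancel₀ hcard.ne', one_mul] at this
      calc (p : ℝ) * Real.log ((p : ℝ) / s.card)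
          = (s.card : ℝ) * (↑p / ↑(s.card)) * Real.log (↑p / ↑(s.card)) := by
            field_simp
        _ ≤ ∑ k ∈ s, (t k : ℝ) * Real.log (t k) := this
    rw [pow_self_eq_exp, hprod]
    have hlogdiv : Real.log ((p:ℝ) / s.card) = Real.log p - Real.log s.card :=
      Real.log_div hppos'.ne' hcard.ne'
    rw [hlogdiv, mul_sub] at jensen2
    have key : (p:ℝ) * Real.log p ≤ (p:ℝ) * Real.log s.card
        + ∑ k ∈ s, (t k : ℝ) * Real.log (t k) := by linarith
    calc Real.exp ((p:ℝ) * Real.log p)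
        ≤ Real.exp ((p:ℝ) * Real.log s.card + ∑ k ∈ s, (t k : ℝ) * Real.log (t k)) :=
          Real.exp_le_exp.2 key
      _ = (s.card : ℝ) ^ p * Real.exp (∑ k ∈ s, (t k : ℝ) * Real.log (t k)) := by
          rw [Real.exp_add]
          congr 1
          rw [← Real.log_pow, Real.exp_log (pow_pos hcard p)]
  

variable {α : Type*} [Fintype α] [DecidableEq α]

theorem bregman_aux (N : ℕ) : ∀ (I J : Finset α) (R : α → Finset α), I.card = N →
    I.card = J.card → (∀ a ∈ I, R a ⊆ J) →
    ((okSet I R).card : ℝ) ≤ ∏ a ∈ I, bf (R a).card := by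
  induction N using Nat.strong_induction_on with
  | _ N ih =>
  intro I J R hN hIJ hRJ
  by_cases hp0 : (okSet I R).card = 0
  · rw [hp0]
    push_cast
    exact Finset.prod_nonneg fun a _ => (bf_pos _).le
  rcases Finset.eq_empty_or_nonempty I with rfl | hIne
  · rw [okSet_empty]
    simp
  set p := (okSet I R).card with hpdef
  have hppos : 0 < p := Nat.pos_of_ne_zero hp0
  set q : α → α → ℕ := fun i k => (okSet (I.erase i) (fun a => (R a).erase k)).card with hq
  have hRne : ∀ i ∈ I, (R i).Nonempty := by
    intro i hi
    obtain ⟨f, hf⟩ := Finset.card_pos.1 hppos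
    exact ⟨vf f i, (vf_spec hf hi).2⟩
  have hr1 : ∀ i ∈ I, 1 ≤ (R i).card := fun i hi => Finset.card_pos.2 (hRne i hi)
  have hrN : ∀ i ∈ I, (R i).card ≤ I.card := fun i hi =>
    hIJ ▸ Finset.card_le_card (hRJ i hi)
  have hsum : ∀ i ∈ I, p = ∑ k ∈ R i, q i k := by
    intro i hi
    rw [hpdef, card_okSet_eq_sum I R hi]
    exact Finset.sum_congr rfl fun k hk => card_fiber I R hi hk
  have hfib : ∀ i ∈ I, ∀ k ∈ R i,
      ((okSet I R).filter (fun f => vf f i = k)).card = q i k := by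
    intro i hi k hk
    rw [show ((okSet I R).filter (fun f => vf f i = k)) =
        ((okSet I R).filter (fun f => f i = some k)) from
      Finset.filter_congr fun f hf => by simp [(vf_spec hf hi).1]]
    exact card_fiber I R hi hk
  have step2 : ∀ i ∈ I, ((p:ℝ))^p ≤ ((R i).card : ℝ)^p * ∏ f ∈ okSet I R, (q i (vf f i) : ℝ) := by
    intro i hi
    have h1 := amgm (R i) (hRne i hi) (q i)
    rw [← hsum i hi] at h1
    have h2 : ∏ k ∈ R i, ((q i k : ℝ)) ^ (q i k) = ∏ f ∈ okSet I R, (q i (vf f i) : ℝ) := by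
      rw [← Finset.prod_fiberwise_of_maps_to (g := fun f => vf f i)
        (fun f hf => (vf_spec hf hi).2) (fun f => (q i (vf f i) : ℝ))]
      refine Finset.prod_congr rfl fun k hk => ?_
      rw [Finset.prod_congr rfl (fun f hf => by
          rw [(Finset.mem_filter.1 hf).2] : ∀ f ∈ (okSet I R).filter (fun f => vf f i = k),
            (q i (vf f i) : ℝ) = (q i k : ℝ)),
        Finset.prod_const, hfib i hi k hk]
    rw [← h2]
    exact h1
  have hvfinj : ∀ f ∈ okSet I R, ∀ a ∈ I, ∀ b ∈ I, vf f a = vf f b → a = b := by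
    intro f hf a ha b hb hab
    obtain ⟨-, -, h3⟩ := mem_okSet.1 hf
    apply h3 a ha b hb
    rw [(vf_spec hf ha).1, (vf_spec hf hb).1, hab]
  have himage : ∀ f ∈ okSet I R, Finset.image (vf f) I = J := by
    intro f hf
    apply Finset.eq_of_subset_of_card_le
    · intro k hk
      obtain ⟨i, hi, rfl⟩ := Finset.mem_image.1 hk
      exact hRJ i hi (vf_spec hf hi).2
    · calc J.card = I.card := hIJ.symm
        _ = (Finset.image (vf f) I).card :=
          (Finset.card_image_of_injOn fun a ha b hb hab =>
            hvfinj f hf a ha b hb hab).symm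
        _ ≤ (Finset.image (vf f) I).card := le_rfl
  have hcount : ∀ f ∈ okSet I R, ∀ j ∈ I,
      ((I.erase j).filter (fun i => vf f i ∈ R j)).card = (R j).card - 1 := by
    intro f hf j hj
    rw [show (R j).card - 1 = ((R j).erase (vf f j)).card from
      (Finset.card_erase_of_mem (vf_spec hf hj).2).symm]
    apply Finset.card_bij (fun i _ => vf f i)
    · intro i hi
      obtain ⟨himem, hiR⟩ := Finset.mem_filter.1 hi
      obtain ⟨hij, hiI⟩ := Finset.mem_erase.1 himem
      exact Finset.mem_erase.2 ⟨fun h => hij (hvfinj f hf i hiI j hj h), hiR⟩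
    · intro a ha b hb h
      obtain ⟨-, haI⟩ := Finset.mem_erase.1 (Finset.mem_filter.1 ha).1
      obtain ⟨-, hbI⟩ := Finset.mem_erase.1 (Finset.mem_filter.1 hb).1
      exact hvfinj f hf a haI b hbI h
    · intro k hk
      obtain ⟨hkj, hkR⟩ := Finset.mem_erase.1 hk
      have hkJ : k ∈ J := hRJ j hj hkR
      rw [← himage f hf] at hkJ
      obtain ⟨i, hi, rfl⟩ := Finset.mem_image.1 hkJ
      refine ⟨i, Finset.mem_filter.2 ⟨Finset.mem_erase.2 ⟨?_, hi⟩, hkR⟩, rfl⟩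
      rintro rfl
      exact hkj rfl
  have hrow : ∀ f ∈ okSet I R, ∀ j ∈ I,
      ∏ i ∈ I.erase j, bf ((R j).erase (vf f i)).card
        = bf ((R j).card - 1) ^ ((R j).card - 1) * bf ((R j).card) ^ (I.card - (R j).card) := by
    intro f hf j hj
    rw [← Finset.prod_filter_mul_prod_filter_not (I.erase j) (fun i => vf f i ∈ R j)]
    congr 1
    · rw [Finset.prod_congr rfl (fun i hi => by
          rw [Finset.card_erase_of_mem (Finset.mem_filter.1 hi).2] :
          ∀ i ∈ (I.erase j).filter (fun i => vf f i ∈ R j),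
            bf ((R j).erase (vf f i)).card = bf ((R j).card - 1)),
        Finset.prod_const, hcount f hf j hj]
    · rw [Finset.prod_congr rfl (fun i hi => by
          rw [Finset.erase_eq_of_notMem (Finset.mem_filter.1 hi).2] :
          ∀ i ∈ (I.erase j).filter (fun i => ¬ vf f i ∈ R j),
            bf ((R j).erase (vf f i)).card = bf (R j).card),
        Finset.prod_const]
      congr 1
      have h1 := Finset.card_filter_add_card_filter_not
        (s := I.erase j) (p := fun i => vf f i ∈ R j)
      rw [hcount f hf j hj, Finset.card_erase_of_mem hj] at h1
      have := hr1 j hj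
      have := hrN j hj
      omega
  have hbf : ∀ r Nc : ℕ, 1 ≤ r → r ≤ Nc →
      (r : ℝ) * (bf (r-1) ^ (r-1) * bf r ^ (Nc - r)) = bf r ^ Nc := by
    intro r Nc h1 h2
    rw [bf_pow_self]
    have hmf : (r:ℝ) * ((r-1).factorial : ℝ) = (r.factorial : ℝ) := by
      exact_mod_cast congrArg (Nat.cast (R := ℝ)) (Nat.mul_factorial_pred (by omega))
    rw [← mul_assoc, hmf, ← bf_pow_self r, ← pow_add]
    congr 1
    omega
  have step5 : ∀ f ∈ okSet I R, ∏ i ∈ I, (((R i).card : ℝ) * (q i (vf f i) : ℝ))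
      ≤ (∏ j ∈ I, bf (R j).card) ^ I.card := by
    intro f hf
    have hIH : ∀ i ∈ I, (q i (vf f i) : ℝ) ≤ ∏ j ∈ I.erase i, bf ((R j).erase (vf f i)).card := by
      intro i hi
      have hk : vf f i ∈ J := hRJ i hi (vf_spec hf hi).2
      have hNpos : 0 < I.card := Finset.card_pos.2 hIne
      refine ih (I.erase i).card ?_ (I.erase i) (J.erase (vf f i)) _ rfl ?_ ?_
      · rw [Finset.card_erase_of_mem hi, hN]
        rw [hN] at hNpos
        omega
      · rw [Finset.card_erase_of_mem hi, Finset.card_erase_of_mem hk, hIJ]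
      · intro a ha
        exact Finset.erase_subset_erase _ (hRJ a (Finset.mem_of_mem_erase ha))
    calc ∏ i ∈ I, (((R i).card : ℝ) * (q i (vf f i) : ℝ))
        ≤ ∏ i ∈ I, (((R i).card : ℝ) * ∏ j ∈ I.erase i, bf ((R j).erase (vf f i)).card) := by
          apply Finset.prod_le_prod
          · intro i hi; positivity
          · intro i hi
            exact mul_le_mul_of_nonneg_left (hIH i hi) (by positivity)
      _ = (∏ i ∈ I, ((R i).card : ℝ)) *
            ∏ i ∈ I, ∏ j ∈ I.erase i, bf ((R j).erase (vf f i)).card :=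
          Finset.prod_mul_distrib
      _ = (∏ i ∈ I, ((R i).card : ℝ)) *
            ∏ j ∈ I, ∏ i ∈ I.erase j, bf ((R j).erase (vf f i)).card := by
          congr 1
          refine Finset.prod_comm' fun i j => ?_
          simp only [Finset.mem_erase, ne_eq]
          constructor
          · rintro ⟨h1, h2, h3⟩
            exact ⟨⟨fun h => h2 h.symm, h1⟩, h3⟩
          · rintro ⟨⟨h2, h1⟩, h3⟩
            exact ⟨h1, fun h => h2 h.symm, h3⟩
      _ = ∏ j ∈ I, (((R j).card : ℝ) *
            (bf ((R j).card - 1) ^ ((R j).card - 1) * bf ((R j).card) ^ (I.card - (R j).card))) := by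
          rw [Finset.prod_mul_distrib]
          exact congrArg _ (Finset.prod_congr rfl fun j hj => hrow f hf j hj)
      _ = ∏ j ∈ I, bf ((R j).card) ^ I.card :=
          Finset.prod_congr rfl fun j hj => hbf _ _ (hr1 j hj) (hrN j hj)
      _ = (∏ j ∈ I, bf (R j).card) ^ I.card := Finset.prod_pow _ _ _
  have step3 : ((p:ℝ))^(p * I.card) ≤
      ∏ f ∈ okSet I R, ∏ i ∈ I, (((R i).card : ℝ) * (q i (vf f i) : ℝ)) := by
    have h := Finset.prod_le_prod (s := I) (f := fun _ => ((p:ℝ))^p)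
      (g := fun i => ((R i).card : ℝ)^p * ∏ f ∈ okSet I R, (q i (vf f i) : ℝ))
      (fun i _ => by positivity) (fun i hi => step2 i hi)
    rw [Finset.prod_const, ← pow_mul] at h
    refine h.trans (le_of_eq ?_)
    calc ∏ i ∈ I, (((R i).card : ℝ)^p * ∏ f ∈ okSet I R, (q i (vf f i) : ℝ))
        = (∏ i ∈ I, ((R i).card:ℝ))^p * ∏ f ∈ okSet I R, ∏ i ∈ I, (q i (vf f i) : ℝ) := by
          rw [Finset.prod_mul_distrib, Finset.prod_pow, Finset.prod_comm]
      _ = ∏ f ∈ okSet I R, ((∏ i ∈ I, ((R i).card:ℝ)) * ∏ i ∈ I, (q i (vf f i) : ℝ)) := by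
          rw [Finset.prod_mul_distrib, Finset.prod_const]
      _ = ∏ f ∈ okSet I R, ∏ i ∈ I, (((R i).card:ℝ) * (q i (vf f i) : ℝ)) :=
          Finset.prod_congr rfl fun f _ => Finset.prod_mul_distrib.symm
  have final : ((p:ℝ))^(p * I.card) ≤ (∏ j ∈ I, bf (R j).card) ^ (p * I.card) := by
    refine step3.trans ?_
    calc ∏ f ∈ okSet I R, ∏ i ∈ I, (((R i).card : ℝ) * (q i (vf f i) : ℝ))
        ≤ ∏ f ∈ okSet I R, (∏ j ∈ I, bf (R j).card) ^ I.card :=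
          Finset.prod_le_prod (fun f _ => Finset.prod_nonneg fun i _ => by positivity) step5
      _ = (∏ j ∈ I, bf (R j).card) ^ (p * I.card) := by
          rw [Finset.prod_const, ← pow_mul, mul_comm]
  exact le_of_pow_le_pow_left₀
    (Nat.mul_ne_zero hp0 (Finset.card_ne_zero_of_mem hIne.choose_spec))
    (Finset.prod_nonneg fun j _ => (bf_pos _).le) final

end Bregman

/-- The permanent of an n×n real matrix. -/
noncomputable def perm {n : ℕ} (A : Matrix (Fin n) (Fin n) ℝ) : ℝ :=
  ∑ σ : Equiv.Perm (Fin n), ∏ i, A i (σ i)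

/-- Brégman's theorem (Minc's conjecture): the permanent of a 0-1 matrix with row
sums `r_i` is at most `∏ (r_i!)^(1/r_i)` (factors with `r_i = 0` are 1, which is
automatic here since `0! = 1` and `1/0 = 0` in ℝ). -/
theorem stmt_18 {n : ℕ} (A : Matrix (Fin n) (Fin n) ℝ)
    (h01 : ∀ i j, A i j = 0 ∨ A i j = 1) :
    perm A ≤ ∏ i : Fin n,
      ((Nat.factorial (Set.ncard {j | A i j = 1}) : ℝ)) ^
        ((1 : ℝ) / (Set.ncard {j | A i j = 1} : ℝ)) := by
  classical
  set R : Fin n → Finset (Fin n) := fun i => Finset.univ.filter (fun j => A i j = 1) with hR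
  have hmemR : ∀ i k, k ∈ R i ↔ A i k = 1 := by
    intro i k
    rw [hR]
    simp
  have hterm : ∀ σ : Equiv.Perm (Fin n), ∏ i, A i (σ i) =
      if (∀ i, A i (σ i) = 1) then 1 else 0 := by
    intro σ
    split_ifs with h
    · exact Finset.prod_eq_one fun i _ => h i
    · push_neg at h
      obtain ⟨i, hi⟩ := h
      exact Finset.prod_eq_zero (Finset.mem_univ i) ((h01 i (σ i)).resolve_right hi)
  have hperm : perm A = ((Finset.univ.filter
      fun σ : Equiv.Perm (Fin n) => ∀ i, A i (σ i) = 1).card : ℝ) := by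
    rw [perm, Finset.sum_congr rfl (fun σ _ => hterm σ), Finset.sum_boole]
  have hcard : (Finset.univ.filter fun σ : Equiv.Perm (Fin n) => ∀ i, A i (σ i) = 1).card
      = (Bregman.okSet (Finset.univ : Finset (Fin n)) R).card := by
    apply Finset.card_bij (fun σ _ => fun a => some (σ a))
    · intro σ hσ
      rw [Bregman.mem_okSet]
      refine ⟨fun a ha => absurd (Finset.mem_univ a) ha, fun a _ => ⟨σ a, ?_, rfl⟩,
        fun a _ b _ hab => σ.injective (Option.some_inj.1 hab)⟩
      exact (hmemR a (σ a)).2 ((Finset.mem_filter.1 hσ).2 a)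
    · intro σ _ τ _ h
      ext a : 1
      exact Option.some_inj.1 (congrFun h a)
    · intro f hf
      have hinj : Function.Injective (Bregman.vf f) := fun a b hab =>
        (Bregman.mem_okSet.1 hf).2.2 a (Finset.mem_univ a) b (Finset.mem_univ b)
          (by rw [(Bregman.vf_spec hf (Finset.mem_univ a)).1,
            (Bregman.vf_spec hf (Finset.mem_univ b)).1, hab])
      refine ⟨Equiv.ofBijective _ (Finite.injective_iff_bijective.1 hinj), ?_, ?_⟩
      · refine Finset.mem_filter.2 ⟨Finset.mem_univ _, fun i => ?_⟩
        exact (hmemR i _).1 (Bregman.vf_spec hf (Finset.mem_univ i)).2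
      · funext a
        exact ((Bregman.vf_spec hf (Finset.mem_univ a)).1).symm
  have hn : ∀ i, Set.ncard {j | A i j = 1} = (R i).card := by
    intro i
    rw [Set.ncard_eq_toFinset_card', Set.toFinset_setOf, hR]
  have hmain := Bregman.bregman_aux (α := Fin n) (Finset.univ.card)
    Finset.univ Finset.univ R rfl rfl (fun a _ => Finset.subset_univ _)
  rw [hperm, hcard]
  refine hmain.trans (le_of_eq ?_)
  refine Finset.prod_congr rfl fun i _ => ?_
  rw [hn i, Bregman.bf]
end
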